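/- Suppose s ≠ t, s is connected to t in G, and dist_G(s,t) ≤ k. Then s and t are connected in the condensed transition graph G*_k and dist_{G*_k}(s,t) = dist_G(s,t); i.e., the condensed transition graph preserves the s–t distance. -/
import Mathlib


open SimpleGraph

/-- A walk `w` contains the edge `(u, v)` if some step (dart) of `w` goes from `u` to `v`. -/
def ContainsEdge {V : Type*} (G : SimpleGraph V) {s t : V} (w : G.Walk s t) (u v : V) : Prop :=
  ∃ d ∈ w.darts, d.toProd = (u, v)

/-- The edge set of the condensed transition graph `G*_k`: the union, over all edges `(u, v)` of
`G` contained in some `s`–`t` walk of length at most `k` in `G`, of the edges of the fixed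
shortest walk `σ u : s → u`, the edge `(u, v)` itself, and the edges of the fixed shortest walk
`τ v : v → t`. -/
def condensedEdgeSet {V : Type*} (G : SimpleGraph V) (s t : V) (k : ℕ)
    (σ : ∀ w : V, G.Reachable s w → G.Walk s w)
    (τ : ∀ w : V, G.Reachable w t → G.Walk w t) : Set (Sym2 V) :=
  {e | ∃ u v, G.Adj u v ∧ (∃ w : G.Walk s t, w.length ≤ k ∧ ContainsEdge G w u v) ∧
    (e = s(u, v) ∨ (∃ hu : G.Reachable s u, e ∈ (σ u hu).edges) ∨
      (∃ hv : G.Reachable v t, e ∈ (τ v hv).edges))}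

/-- The condensed transition graph `G*_k`. -/
def condensedGraph {V : Type*} (G : SimpleGraph V) (s t : V) (k : ℕ)
    (σ : ∀ w : V, G.Reachable s w → G.Walk s w)
    (τ : ∀ w : V, G.Reachable w t → G.Walk w t) : SimpleGraph V :=
  SimpleGraph.fromEdgeSet (condensedEdgeSet G s t k σ τ)

/-- if `s ≠ t`, `s` is connected to `t` in `G`, and `dist_G s t ≤ k`, then `s` and
`t` are connected in the condensed transition graph `G*_k` and the `s`–`t` distance in `G*_k`
equals the `s`–`t` distance in `G`. -/
theorem condensed_preserves_dist {V : Type*} (G : SimpleGraph V) (s t : V) (k : ℕ)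
    (hst : s ≠ t) (hreach : G.Reachable s t) (hdist : G.dist s t ≤ k)
    (σ : ∀ w : V, G.Reachable s w → G.Walk s w)
    (hσ : ∀ (w : V) (h : G.Reachable s w), (σ w h).length = G.dist s w)
    (τ : ∀ w : V, G.Reachable w t → G.Walk w t)
    (hτ : ∀ (w : V) (h : G.Reachable w t), (τ w h).length = G.dist w t) :
    (condensedGraph G s t k σ τ).Reachable s t ∧
      (condensedGraph G s t k σ τ).dist s t = G.dist s t := by
  have hle : condensedGraph G s t k σ τ ≤ G := by
    intro a b hab
    rw [condensedGraph, fromEdgeSet_adj] at hab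
    obtain ⟨⟨u, v, huv, _, hcase⟩, hne⟩ := hab
    rcases hcase with h | ⟨hu, h⟩ | ⟨hv, h⟩
    · rw [Sym2.eq_iff] at h
      rcases h with ⟨rfl, rfl⟩ | ⟨rfl, rfl⟩
      · exact huv
      · exact huv.symm
    · exact Walk.adj_of_mem_edges _ h
    · exact Walk.adj_of_mem_edges _ h
  obtain ⟨p, hp⟩ := hreach.exists_walk_length_eq_dist
  have hedges : ∀ e ∈ p.edges, e ∈ (condensedGraph G s t k σ τ).edgeSet := by
    intro e he
    rw [Walk.edges, List.mem_map] at he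
    obtain ⟨d, hd, rfl⟩ := he
    have hadj := d.adj
    rw [condensedGraph, edgeSet_fromEdgeSet]
    refine ⟨⟨d.fst, d.snd, hadj, ⟨p, hp ▸ hdist, d, hd, rfl⟩, Or.inl rfl⟩, ?_⟩
    simp [Dart.edge, hadj.ne]
  let q := p.transfer _ hedges
  constructor
  · exact ⟨q⟩
  · apply le_antisymm
    · calc (condensedGraph G s t k σ τ).dist s t ≤ q.length := dist_le q
        _ = p.length := Walk.length_transfer _ _
        _ = G.dist s t := hp
    · obtain ⟨r, hr⟩ := (Reachable.exists_walk_length_eq_dist ⟨q⟩ : _)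
      calc G.dist s t ≤ (r.mapLe hle).length := dist_le _
        _ = r.length := Walk.length_map _ _
        _ = _ := hr
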